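/- Let X₀, Y₀ be nonempty finite sets, E ⊆ X₀ × Y₀, and suppose X̃ ⊆ X₀, Ỹ ⊆ Y₀ satisfy μ₀(X̃)·μ⁰(Ỹ) ≥ 1/(10r⁴) and d(X̃,Ỹ) ≥ d(X₀,Y₀) + 1/(10r), where r ≥ 1. Then for the partition pair P* = ({X̃, X₀\X̃}, {Ỹ, Y₀\Ỹ}), the energy satisfies ρ(P*) ≥ d(X₀,Y₀)² + 1/(1000·r⁶). -/

import Mathlib

open Finset

/-- Edge density of `E` between `A` and `B`. -/
noncomputable def dens {X Y : Type*} [Fintype X] [Fintype Y] (E : X → Y → Bool)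
    (A : Finset X) (B : Finset Y) : ℝ :=
  (((A ×ˢ B).filter (fun p => E p.1 p.2)).card : ℝ) / ((A.card : ℝ) * (B.card : ℝ))

lemma dens_mul_card {X Y : Type*} [Fintype X] [Fintype Y] (E : X → Y → Bool)
    (A : Finset X) (B : Finset Y) :
    dens E A B * ((A.card : ℝ) * B.card)
      = (((A ×ˢ B).filter (fun p => E p.1 p.2)).card : ℝ) := by
  unfold _root_.dens
  rcases eq_or_ne ((A.card : ℝ) * (B.card : ℝ)) 0 with h | h
  · rcases mul_eq_zero.1 h with h' | h'
    · have : A = ∅ := by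
        have := Nat.cast_eq_zero.1 h'
        exact card_eq_zero.1 this
      simp [this, h]
    · have : B = ∅ := by
        have := Nat.cast_eq_zero.1 h'
        exact card_eq_zero.1 this
      simp [this, h]
  · rw [div_mul_eq_mul_div, mul_div_assoc, div_self h, mul_one]

lemma edge_split_right {X Y : Type*} [Fintype X] [Fintype Y] [DecidableEq X] [DecidableEq Y]
    (E : X → Y → Bool) (A : Finset X) (B : Finset Y) :
    (((A ×ˢ B).filter fun p => E p.1 p.2).card : ℕ)
      + ((A ×ˢ (univ \ B)).filter fun p => E p.1 p.2).card
      = ((A ×ˢ (univ : Finset Y)).filter fun p => E p.1 p.2).card := by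
  rw [← card_union_of_disjoint, ← filter_union, ← product_union, union_sdiff_of_subset (subset_univ B)]
  exact disjoint_filter_filter (disjoint_product.2 (Or.inr disjoint_sdiff))

lemma edge_split_left {X Y : Type*} [Fintype X] [Fintype Y] [DecidableEq X] [DecidableEq Y]
    (E : X → Y → Bool) (A : Finset X) (B : Finset Y) :
    (((A ×ˢ B).filter fun p => E p.1 p.2).card : ℕ)
      + (((univ \ A) ×ˢ B).filter fun p => E p.1 p.2).card
      = (((univ : Finset X) ×ˢ B).filter fun p => E p.1 p.2).card := by
  rw [← card_union_of_disjoint, ← filter_union, ← union_product, union_sdiff_of_subset (subset_univ A)]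
  exact disjoint_filter_filter (disjoint_product.2 (Or.inl disjoint_sdiff))

set_option maxHeartbeats 1000000 in
/-- Defect Cauchy–Schwarz / energy increment: if `μ(X̃) μ(Ỹ) ≥ 1/(10 r⁴)` and
`d(X̃, Ỹ) ≥ d(X₀, Y₀) + 1/(10 r)`, then the partition pair
`({X̃, X₀ \ X̃}, {Ỹ, Y₀ \ Ỹ})` has energy at least `d(X₀, Y₀)² + 1/(1000 r⁶)`. -/
theorem energy_increment {X₀ Y₀ : Type*} [Fintype X₀] [Fintype Y₀]
    [Nonempty X₀] [Nonempty Y₀] [DecidableEq X₀] [DecidableEq Y₀]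
    (E : X₀ → Y₀ → Bool) (Xt : Finset X₀) (Yt : Finset Y₀) (r : ℝ) (hr : 1 ≤ r)
    (h1 : 1 / (10 * r ^ 4) ≤
      ((Xt.card : ℝ) / Fintype.card X₀) * ((Yt.card : ℝ) / Fintype.card Y₀))
    (h2 : dens E (univ : Finset X₀) (univ : Finset Y₀) + 1 / (10 * r) ≤ dens E Xt Yt) :
    dens E (univ : Finset X₀) (univ : Finset Y₀) ^ 2 + 1 / (1000 * r ^ 6) ≤
      dens E Xt Yt ^ 2 * ((Xt.card : ℝ) / Fintype.card X₀) * ((Yt.card : ℝ) / Fintype.card Y₀) +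
      dens E Xt (univ \ Yt) ^ 2 * ((Xt.card : ℝ) / Fintype.card X₀) *
        (((univ \ Yt : Finset Y₀).card : ℝ) / Fintype.card Y₀) +
      dens E (univ \ Xt) Yt ^ 2 * (((univ \ Xt : Finset X₀).card : ℝ) / Fintype.card X₀) *
        ((Yt.card : ℝ) / Fintype.card Y₀) +
      dens E (univ \ Xt) (univ \ Yt) ^ 2 *
        (((univ \ Xt : Finset X₀).card : ℝ) / Fintype.card X₀) *
        (((univ \ Yt : Finset Y₀).card : ℝ) / Fintype.card Y₀) := by
  classical
  have hr0 : (0:ℝ) < r := lt_of_lt_of_le one_pos hr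
  set nX : ℝ := (Fintype.card X₀ : ℝ) with hnXdef
  set nY : ℝ := (Fintype.card Y₀ : ℝ) with hnYdef
  have hnX : 0 < nX := by rw [hnXdef]; exact_mod_cast Fintype.card_pos
  have hnY : 0 < nY := by rw [hnYdef]; exact_mod_cast Fintype.card_pos
  set μ1 : ℝ := (Xt.card : ℝ) / nX with hμ1
  set μ2 : ℝ := (((univ \ Xt : Finset X₀)).card : ℝ) / nX with hμ2
  set ν1 : ℝ := (Yt.card : ℝ) / nY with hν1
  set ν2 : ℝ := (((univ \ Yt : Finset Y₀)).card : ℝ) / nY with hν2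
  have hμsum : μ1 + μ2 = 1 := by
    rw [hμ1, hμ2, ← add_div, div_eq_one_iff_eq hnX.ne']
    rw [card_sdiff_of_subset (subset_univ Xt), card_univ]
    rw [Nat.cast_sub (by simpa using card_le_card (subset_univ Xt))]
    ring
  have hνsum : ν1 + ν2 = 1 := by
    rw [hν1, hν2, ← add_div, div_eq_one_iff_eq hnY.ne']
    rw [card_sdiff_of_subset (subset_univ Yt), card_univ]
    rw [Nat.cast_sub (by simpa using card_le_card (subset_univ Yt))]
    ring
  have hμ1nn : 0 ≤ μ1 := by positivity
  have hμ2nn : 0 ≤ μ2 := by positivity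
  have hν1nn : 0 ≤ ν1 := by positivity
  have hν2nn : 0 ≤ ν2 := by positivity
  set d : ℝ := dens E (univ : Finset X₀) (univ : Finset Y₀) with hd
  set a : ℝ := dens E Xt Yt with ha
  set b : ℝ := dens E Xt (univ \ Yt) with hb
  set c : ℝ := dens E (univ \ Xt) Yt with hc
  set e : ℝ := dens E (univ \ Xt) (univ \ Yt) with he
  -- mean identity
  have key : ∀ (A : Finset X₀) (B : Finset Y₀),
      dens E A B * (((A.card : ℝ)/nX) * ((B.card : ℝ)/nY))
        = (((A ×ˢ B).filter (fun p => E p.1 p.2)).card : ℝ) / (nX * nY) := by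
    intro A B
    rw [div_mul_div_comm, ← mul_div_assoc, _root_.dens_mul_card]
  have hedges : ((((Xt ×ˢ Yt).filter fun p => E p.1 p.2).card : ℝ)
      + (((Xt ×ˢ (univ \ Yt)).filter fun p => E p.1 p.2).card : ℝ)
      + ((((univ \ Xt) ×ˢ Yt).filter fun p => E p.1 p.2).card : ℝ)
      + ((((univ \ Xt) ×ˢ (univ \ Yt)).filter fun p => E p.1 p.2).card : ℝ))
      = ((((univ : Finset X₀) ×ˢ (univ : Finset Y₀)).filter fun p => E p.1 p.2).card : ℝ) := by
    have e1 := edge_split_right E Xt Yt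
    have e2 := edge_split_right E (univ \ Xt) Yt
    have e3 := edge_split_left E Xt (univ : Finset Y₀)
    push_cast [← e1, ← e2, ← e3]
    ring
  have hduniv : d = ((((univ : Finset X₀) ×ˢ (univ : Finset Y₀)).filter
      fun p => E p.1 p.2).card : ℝ) / (nX * nY) := by
    rw [hd]
    unfold _root_.dens
    rw [card_univ, card_univ]
  have hmean : a * (μ1 * ν1) + b * (μ1 * ν2) + c * (μ2 * ν1) + e * (μ2 * ν2) = d := by
    rw [ha, hb, hc, he, hμ1, hμ2, hν1, hν2]
    rw [key Xt Yt, key Xt (univ \ Yt), key (univ \ Xt) Yt, key (univ \ Xt) (univ \ Yt)]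
    rw [hduniv, ← add_div, ← add_div, ← add_div, hedges]
  have hwsum : μ1 * ν1 + μ1 * ν2 + μ2 * ν1 + μ2 * ν2 = 1 := by
    linear_combination (ν1 + ν2) * hμsum + hνsum
  -- variance identity
  have hvar : a^2*(μ1*ν1) + b^2*(μ1*ν2) + c^2*(μ2*ν1) + e^2*(μ2*ν2) - d^2
      = (a-d)^2*(μ1*ν1) + (b-d)^2*(μ1*ν2) + (c-d)^2*(μ2*ν1) + (e-d)^2*(μ2*ν2) := by
    linear_combination (2*d) * hmean - d^2 * hwsum
  have had : 1/(10*r) ≤ a - d := by linarith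
  have hkey : 1/(1000*r^6) ≤ (a-d)^2 * (μ1*ν1) := by
    have h5 : (1/(10*r))^2 ≤ (a-d)^2 := by
      apply pow_le_pow_left₀ (by positivity) had
    calc 1/(1000*r^6) = (1/(10*r))^2 * (1/(10*r^4)) := by
          field_simp; ring
      _ ≤ (a-d)^2 * (μ1*ν1) := by
          apply mul_le_mul h5 h1 (by positivity) (by positivity)
  have t2 : 0 ≤ (b-d)^2*(μ1*ν2) := mul_nonneg (sq_nonneg _) (mul_nonneg hμ1nn hν2nn)
  have t3 : 0 ≤ (c-d)^2*(μ2*ν1) := mul_nonneg (sq_nonneg _) (mul_nonneg hμ2nn hν1nn)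
  have t4 : 0 ≤ (e-d)^2*(μ2*ν2) := mul_nonneg (sq_nonneg _) (mul_nonneg hμ2nn hν2nn)
  have t1 : 0 ≤ (a-d)^2*(μ1*ν1) := mul_nonneg (sq_nonneg _) (mul_nonneg hμ1nn hν1nn)
  linarith [hvar, hkey, t2, t3, t4]
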